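/- arXiv:2108.06892 — 3 statements merged into one kernel-verified Lean document; each statement's English description precedes it below -/
import Mathlib

section
/- Let X, Y be jointly standard normal with covariance r, and i, j ≥ 1 integers. Then there exists a polynomial f (depending on i,j) with f(0) = 1 such that E[X^{2i−1}Y^{2j−1}] = (2i−1)!!·(2j−1)!!·r·f(r²). -/
open MeasureTheory ProbabilityTheory Nat

/-- `X` is a centered Gaussian random vector with covariance matrix `R`:
every linear combination `∑ tᵢ Xᵢ` is Gaussian with mean `0` and variance `tᵀRt`. -/
def IsCenteredGaussian {Ω : Type*} [MeasureSpace Ω] {n : ℕ}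
    (X : Ω → Fin n → ℝ) (R : Matrix (Fin n) (Fin n) ℝ) : Prop :=
  ∀ t : Fin n → ℝ,
    Measure.map (fun ω => ∑ i, t i * X ω i) (volume : Measure Ω)
      = gaussianReal 0 (Real.toNNReal (∑ i, ∑ j, t i * R i j * t j))

open Real NNReal ENNReal Polynomial Finset Filter


lemma integrable_pow_mul_exp_neg_mul_sq' {b : ℝ} (hb : 0 < b) (n : ℕ) :
    Integrable fun x : ℝ => x ^ n * Real.exp (-b * x ^ 2) := by
  have := integrable_rpow_mul_exp_neg_mul_sq hb (s := n)
    (lt_of_lt_of_le neg_one_lt_zero (Nat.cast_nonneg n))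
  simpa [Real.rpow_natCast] using this

lemma integral_pow_mul_exp_neg_mul_sq_rec {b : ℝ} (hb : 0 < b) (n : ℕ) :
    ∫ x : ℝ, x ^ (n + 2) * Real.exp (-b * x ^ 2)
      = ((n + 1) / (2 * b)) * ∫ x : ℝ, x ^ n * Real.exp (-b * x ^ 2) := by
  have hder : ∀ x : ℝ, HasDerivAt (fun x : ℝ => x ^ (n + 1) * Real.exp (-b * x ^ 2))
      ((n + 1 : ℝ) * (x ^ n * Real.exp (-b * x ^ 2)) - 2 * b * (x ^ (n + 2) * Real.exp (-b * x ^ 2))) x := by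
    intro x
    have h1 : HasDerivAt (fun x : ℝ => x ^ (n + 1)) ((n + 1) * x ^ n) x := by
      simpa using hasDerivAt_pow (n + 1) x
    have h2 : HasDerivAt (fun x : ℝ => Real.exp (-b * x ^ 2)) ((-b * (2 * x)) * Real.exp (-b * x ^ 2)) x := by
      have : HasDerivAt (fun x : ℝ => -b * x ^ 2) (-b * (2 * x)) x := by
        simpa using ((hasDerivAt_pow 2 x).const_mul (-b))
      simpa [mul_comm] using this.exp
    refine (h1.fun_mul h2).congr_deriv ?_
    ring
  have ia := (integrable_pow_mul_exp_neg_mul_sq' hb n).const_mul ((n : ℝ) + 1)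
  have ib := (integrable_pow_mul_exp_neg_mul_sq' hb (n + 2)).const_mul (2 * b)
  have h0 := integral_eq_zero_of_hasDerivAt_of_integrable hder (ia.sub ib)
    (integrable_pow_mul_exp_neg_mul_sq' hb (n + 1))
  rw [integral_sub ia ib, integral_const_mul, integral_const_mul, sub_eq_zero] at h0
  rw [div_mul_eq_mul_div, eq_div_iff (by positivity : (2 : ℝ) * b ≠ 0)]
  rw [mul_comm] at h0 ⊢
  linarith [h0]

lemma integral_even_pow_mul_exp_neg_mul_sq {b : ℝ} (hb : 0 < b) (k : ℕ) :
    ∫ x : ℝ, x ^ (2 * k) * Real.exp (-b * x ^ 2)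
      = ((2 * k - 1)‼ : ℝ) / (2 * b) ^ k * Real.sqrt (π / b) := by
  induction k with
  | zero => simpa using integral_gaussian b
  | succ k ih =>
    have h2 : 2 * (k + 1) = 2 * k + 2 := by ring
    rw [h2, integral_pow_mul_exp_neg_mul_sq_rec hb, ih]
    have hd : ((2 * k + 2 - 1)‼ : ℝ) = (2 * k + 1) * ((2 * k - 1)‼ : ℝ) := by
      rw [show 2 * k + 2 - 1 = 2 * k + 1 from by omega, Nat.doubleFactorial_add_one]
      push_cast
      ring
    rw [hd, pow_succ]
    have hb' : ((2 : ℝ) * b) ≠ 0 := by positivity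
    have hp : ((2 : ℝ) * b) ^ k ≠ 0 := pow_ne_zero _ hb'
    field_simp
    push_cast
    ring

lemma gaussianPDF_eq_coe (v : ℝ≥0) :
    gaussianPDF 0 v = fun x => ((Real.toNNReal (gaussianPDFReal 0 v x) : ℝ≥0) : ℝ≥0∞) := by
  ext x
  rfl

lemma gaussianPDFReal_zero_eq (v : ℝ≥0) (x : ℝ) :
    gaussianPDFReal 0 v x = (√(2 * π * v))⁻¹ * rexp (-(2 * (v : ℝ))⁻¹ * x ^ 2) := by
  simp only [gaussianPDFReal, sub_zero]
  congr 1
  rw [neg_div, div_eq_mul_inv]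
  ring

lemma integral_fun_gaussianReal {v : ℝ≥0} (hv : v ≠ 0) (g : ℝ → ℝ) :
    ∫ x, g x ∂(gaussianReal 0 v) = ∫ x, gaussianPDFReal 0 v x * g x := by
  rw [gaussianReal_of_var_ne_zero _ hv, gaussianPDF_eq_coe,
    integral_withDensity_eq_integral_smul
      ((measurable_gaussianPDFReal 0 v).real_toNNReal) g]
  refine integral_congr_ae (Filter.Eventually.of_forall fun x => ?_)
  simp [NNReal.smul_def, Real.coe_toNNReal _ (gaussianPDFReal_nonneg 0 v x)]

lemma integrable_pow_gaussianReal (v : ℝ≥0) (n : ℕ) :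
    Integrable (fun x => x ^ n) (gaussianReal 0 v) := by
  rcases eq_or_ne v 0 with rfl | hv
  · rw [gaussianReal_zero_var]
    refine ⟨(measurable_id.pow_const n).aestronglyMeasurable, ?_⟩
    simp [HasFiniteIntegral, lintegral_dirac]
  · rw [gaussianReal_of_var_ne_zero _ hv, gaussianPDF_eq_coe,
      integrable_withDensity_iff_integrable_smul
        ((measurable_gaussianPDFReal 0 v).real_toNNReal)]
    have hb : 0 < (2 * (v : ℝ))⁻¹ := by positivity
    have := (integrable_pow_mul_exp_neg_mul_sq' hb n).const_mul (√(2 * π * v))⁻¹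
    refine this.congr (Filter.Eventually.of_forall fun x => ?_)
    simp only [NNReal.smul_def, smul_eq_mul]
    rw [Real.coe_toNNReal _ (gaussianPDFReal_nonneg 0 v x), gaussianPDFReal_zero_eq v x]
    ring

lemma integral_even_pow_gaussianReal (v : ℝ≥0) (k : ℕ) :
    ∫ x, x ^ (2 * k) ∂(gaussianReal 0 v) = ((2 * k - 1)‼ : ℝ) * (v : ℝ) ^ k := by
  rcases eq_or_ne v 0 with rfl | hv
  · rw [gaussianReal_zero_var, integral_dirac]
    rcases Nat.eq_zero_or_pos k with rfl | hk
    · simp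
    · simp [zero_pow (by omega : 2 * k ≠ 0), zero_pow (by omega : k ≠ 0)]
  · have hv' : (0 : ℝ) < v := by positivity
    have hb : 0 < (2 * (v : ℝ))⁻¹ := by positivity
    rw [integral_fun_gaussianReal hv]
    have h0 : ∀ x : ℝ, gaussianPDFReal 0 v x * x ^ (2 * k)
        = (√(2 * π * v))⁻¹ * (x ^ (2 * k) * Real.exp (-(2 * (v:ℝ))⁻¹ * x ^ 2)) := by
      intro x
      rw [gaussianPDFReal_zero_eq]
      ring
    rw [integral_congr_ae (Filter.Eventually.of_forall fun x => h0 x), integral_const_mul,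
      integral_even_pow_mul_exp_neg_mul_sq hb]
    have h1 : (2 * (2 * (v : ℝ))⁻¹) = (v : ℝ)⁻¹ := by field_simp
    have h2 : π / (2 * (v : ℝ))⁻¹ = 2 * π * v := by field_simp
    rw [h1, h2]
    have h3 : √(2 * π * (v:ℝ)) ≠ 0 := by positivity
    field_simp
    rw [← mul_pow, one_div, inv_mul_cancel₀ hv'.ne', one_pow]

lemma coeff_pow_sq_add_one (N d : ℕ) :
    ((X ^ 2 + 1 : Polynomial ℝ) ^ N).coeff d
      = if Even d then (N.choose (d / 2) : ℝ) else 0 := by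
  rw [add_pow, finset_sum_coeff]
  have hterm : ∀ q, (((X : Polynomial ℝ) ^ 2) ^ q * 1 ^ (N - q) * (N.choose q : Polynomial ℝ)).coeff d
      = if d = 2 * q then (N.choose q : ℝ) else 0 := by
    intro q
    rw [one_pow, mul_one, ← pow_mul, ← Polynomial.C_eq_natCast, mul_comm, coeff_C_mul, coeff_X_pow]
    simp [mul_comm]
  rw [Finset.sum_congr rfl fun q _ => hterm q]
  by_cases hd : Even d
  · obtain ⟨c, hc⟩ := hd
    have h2 : ∀ q ∈ Finset.range (N + 1), (if d = 2 * q then (N.choose q : ℝ) else 0)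
        = if c = q then (N.choose q : ℝ) else 0 := by
      intro q _
      congr 1
      simp only [eq_iff_iff]
      omega
    have hEd : Even d := ⟨c, hc⟩
    rw [Finset.sum_congr rfl h2, Finset.sum_ite_eq, show d / 2 = c by omega, if_pos hEd]
    by_cases hcN : c ∈ Finset.range (N + 1)
    · rw [if_pos hcN]
    · rw [if_neg hcN, Nat.choose_eq_zero_of_lt (by simp at hcN; omega)]
      simp
  · rw [if_neg hd, Finset.sum_eq_zero]
    intro q _
    rw [if_neg]
    rintro rfl
    exact hd ⟨q, by ring⟩

lemma sum_range_two_mul_eq (T : ℕ → ℝ) (h : ∀ q, Even q → T q = 0) (i : ℕ) :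
    ∑ q ∈ Finset.range (2 * i), T q = ∑ u ∈ Finset.range i, T (2 * u + 1) := by
  induction i with
  | zero => simp
  | succ i ih =>
    rw [show 2 * (i + 1) = 2 * i + 1 + 1 by ring, Finset.sum_range_succ, Finset.sum_range_succ,
      Finset.sum_range_succ, ih, h (2 * i) ⟨i, by ring⟩]
    ring

lemma coeff_poly (r : ℝ) (m k : ℕ) :
    ((X ^ 2 + Polynomial.C (2 * r) * X + 1 : Polynomial ℝ) ^ m).coeff (2 * k + 1)
      = ∑ u ∈ Finset.range (k + 1), (m.choose (2 * u + 1) : ℝ) * 2 ^ (2 * u + 1)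
          * ((m - (2 * u + 1)).choose (k - u) : ℝ) * r ^ (2 * u + 1) := by
  have key : ∀ q : ℕ,
      ((Polynomial.C (2*r) * X + ((X:Polynomial ℝ)^2+1))^m).coeff (2*k+1)
      = ∑ q ∈ Finset.range (m + 1), (if q ≤ 2*k+1 ∧ Even (2*k+1 - q)
          then (2 * r) ^ q * (m.choose q : ℝ) * ((m - q).choose ((2*k+1 - q) / 2) : ℝ) else 0) := by
    intro _
    rw [add_pow, finset_sum_coeff]
    refine Finset.sum_congr rfl fun q _ => ?_
    rw [mul_pow, ← Polynomial.C_pow, ← Polynomial.C_eq_natCast,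
      show Polynomial.C ((2*r)^q) * (X:Polynomial ℝ)^q * (X^2+1)^(m-q) * Polynomial.C ((m.choose q : ℝ))
        = Polynomial.C ((2*r)^q * (m.choose q : ℝ)) * ((X^2+1)^(m-q) * X^q) by
          rw [Polynomial.C_mul]; ring,
      coeff_C_mul, coeff_mul_X_pow', coeff_pow_sq_add_one]
    by_cases h1 : q ≤ 2*k+1
    · by_cases h2 : Even (2*k+1-q)
      · rw [if_pos h1, if_pos h2, if_pos ⟨h1, h2⟩]; try ring
      · rw [if_pos h1, if_neg h2, if_neg fun h => h2 h.2]; ring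
    · rw [if_neg h1, if_neg fun h => h1 h.1]; ring
  rw [show (X ^ 2 + Polynomial.C (2 * r) * X + 1 : Polynomial ℝ)
      = Polynomial.C (2 * r) * X + (X ^ 2 + 1) by ring, key 0]
  set T : ℕ → ℝ := fun q => (if q ≤ 2*k+1 ∧ Even (2*k+1 - q)
      then (2 * r) ^ q * (m.choose q : ℝ) * ((m - q).choose ((2*k+1 - q) / 2) : ℝ) else 0) with hT
  have hTz : ∀ q, Even q → T q = 0 := by
    intro q hq
    rcases hq with ⟨c, rfl⟩
    rw [hT]
    simp only
    rw [if_neg]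
    rintro ⟨h1, e, he⟩
    omega
  have hTbig : ∀ q, 2*k+1 < q → T q = 0 := by
    intro q hq
    rw [hT]
    simp only
    rw [if_neg]
    rintro ⟨h1, -⟩
    omega
  have hTm : ∀ q, m < q → T q = 0 := by
    intro q hq
    rw [hT]
    simp only [Nat.choose_eq_zero_of_lt hq]
    split_ifs <;> simp
  have hext : ∑ q ∈ Finset.range (m+1), T q = ∑ q ∈ Finset.range (2*(k+1)), T q := by
    rcases le_total (m+1) (2*(k+1)) with h | h
    · refine Finset.sum_subset (Finset.range_subset_range.mpr h) fun q hq1 hq2 => hTm q ?_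
      simp only [Finset.mem_range] at hq2
      omega
    · refine (Finset.sum_subset (Finset.range_subset_range.mpr h) fun q hq1 hq2 => hTbig q ?_).symm
      simp only [Finset.mem_range] at hq2
      omega
  rw [hext, sum_range_two_mul_eq T hTz]
  refine Finset.sum_congr rfl fun u hu => ?_
  simp only [Finset.mem_range] at hu
  rw [hT]
  simp only
  rw [if_pos ⟨by omega, ⟨k - u, by omega⟩⟩, show (2*k+1 - (2*u+1))/2 = k - u by omega, mul_pow]
  ring

lemma realKey (k l : ℕ) :
    ((2 * (k + l) + 1)‼ : ℝ) * (2 * (k + l + 1) * ((k + l).choose k))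
      = ((2 * (k + l) + 2).choose (2 * k + 1) : ℝ) * ((2 * k + 1)‼ * (2 * l + 1)‼) := by
  have h1 : ((k + l).choose k : ℝ) * ((k ! : ℝ) * (l ! : ℝ)) = ((k + l)! : ℝ) := by
    have := Nat.choose_mul_factorial_mul_factorial (Nat.le_add_right k l)
    have e : k + l - k = l := by omega
    rw [e] at this
    exact_mod_cast congrArg (Nat.cast (R := ℝ)) (by rw [← this]; ring)
  have hfs : ((k : ℝ) + l + 1) * ((k + l)! : ℝ) = ((k + l + 1)! : ℝ) := by
    rw [Nat.factorial_succ]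
    push_cast
    ring
  have h6 : (((2 * (k + l) + 2)‼ : ℕ) : ℝ) = 2 * (2 ^ k * 2 ^ l) * ((k + l + 1)! : ℝ) := by
    have := Nat.doubleFactorial_two_mul (k + l + 1)
    rw [show 2 * (k + l + 1) = 2 * (k + l) + 2 by ring] at this
    rw [this]
    push_cast
    rw [pow_add, pow_succ]
    ring
  have h5 : ((2 * (k + l) + 1)‼ : ℝ) * ((2 * (k + l) + 2)‼ : ℝ) = ((2 * (k + l) + 2)! : ℝ) := by
    have := Nat.factorial_eq_mul_doubleFactorial (2 * (k + l) + 1)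
    exact_mod_cast congrArg (Nat.cast (R := ℝ)) (by rw [this]; ring)
  have h2 : ((2 * k + 1)‼ : ℝ) * (2 ^ k * (k ! : ℝ)) = ((2 * k + 1)! : ℝ) := by
    have := Nat.factorial_eq_mul_doubleFactorial (2 * k)
    rw [this, Nat.doubleFactorial_two_mul]
    push_cast
    ring
  have h3 : ((2 * l + 1)‼ : ℝ) * (2 ^ l * (l ! : ℝ)) = ((2 * l + 1)! : ℝ) := by
    have := Nat.factorial_eq_mul_doubleFactorial (2 * l)
    rw [this, Nat.doubleFactorial_two_mul]
    push_cast
    ring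
  have h4 : ((2 * (k + l) + 2).choose (2 * k + 1) : ℝ) * (((2 * k + 1)! : ℝ) * ((2 * l + 1)! : ℝ))
      = ((2 * (k + l) + 2)! : ℝ) := by
    have := Nat.choose_mul_factorial_mul_factorial (show 2 * k + 1 ≤ 2 * (k + l) + 2 by omega)
    have e : 2 * (k + l) + 2 - (2 * k + 1) = 2 * l + 1 := by omega
    rw [e] at this
    exact_mod_cast congrArg (Nat.cast (R := ℝ)) (by rw [← this]; ring)
  have hc : ((2:ℝ) ^ k * (k ! : ℝ)) * (2 ^ l * (l ! : ℝ)) ≠ 0 := by positivity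
  apply mul_right_cancel₀ hc
  linear_combination (2 * ((k:ℝ) + l + 1) * 2^k * 2^l * ((2 * (k + l) + 1)‼ : ℝ)) * h1
    + (2 * (2:ℝ)^k * 2^l * ((2 * (k + l) + 1)‼ : ℝ)) * hfs
    - ((2 * (k + l) + 1)‼ : ℝ) * h6 + h5
    - (((2 * (k + l) + 2).choose (2 * k + 1) : ℝ) * ((2 * l + 1)‼ : ℝ) * 2^l * (l ! : ℝ)) * h2
    - (((2 * (k + l) + 2).choose (2 * k + 1) : ℝ) * ((2 * k + 1)! : ℝ)) * h3
    - h4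

section aux
variable {Ω : Type} [MeasureSpace Ω] {r : ℝ} {X : Ω → Fin 2 → ℝ}
  (hX : IsCenteredGaussian X !![1, r; r, 1])
include hX

lemma aux_law (t : ℝ) :
    Measure.map (fun ω => t * X ω 0 + X ω 1) (volume : Measure Ω)
      = gaussianReal 0 (Real.toNNReal (t ^ 2 + 2 * r * t + 1)) := by
  have h := hX ![t, 1]
  have h1 : (fun ω => ∑ i, ![t, 1] i * X ω i) = fun ω => t * X ω 0 + X ω 1 := by
    funext ω
    simp [Fin.sum_univ_two]
  have h2 : (∑ i, ∑ j, ![t, 1] i * (!![1, r; r, 1] : Matrix (Fin 2) (Fin 2) ℝ) i j * ![t, 1] j)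
      = t ^ 2 + 2 * r * t + 1 := by
    simp [Fin.sum_univ_two, Matrix.cons_val_zero, Matrix.cons_val_one, Matrix.head_cons]
    ring
  rw [h1, h2] at h
  exact h

lemma aux_law0 :
    Measure.map (fun ω => X ω 0) (volume : Measure Ω) = gaussianReal 0 1 := by
  have h := hX ![1, 0]
  have h1 : (fun ω => ∑ i, ![1, 0] i * X ω i) = fun ω => X ω 0 := by
    funext ω
    simp [Fin.sum_univ_two]
  have h2 : (∑ i, ∑ j, ![(1:ℝ), 0] i * (!![1, r; r, 1] : Matrix (Fin 2) (Fin 2) ℝ) i j * ![1, 0] j)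
      = 1 := by
    simp [Fin.sum_univ_two, Matrix.cons_val_zero, Matrix.cons_val_one, Matrix.head_cons]
  rw [h1, h2] at h
  simpa using h

lemma aux_law1 :
    Measure.map (fun ω => X ω 1) (volume : Measure Ω) = gaussianReal 0 1 := by
  have h := hX ![0, 1]
  have h1 : (fun ω => ∑ i, ![0, 1] i * X ω i) = fun ω => X ω 1 := by
    funext ω
    simp [Fin.sum_univ_two]
  have h2 : (∑ i, ∑ j, ![(0:ℝ), 1] i * (!![1, r; r, 1] : Matrix (Fin 2) (Fin 2) ℝ) i j * ![0, 1] j)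
      = 1 := by
    simp [Fin.sum_univ_two, Matrix.cons_val_zero, Matrix.cons_val_one, Matrix.head_cons]
  rw [h1, h2] at h
  simpa using h

omit hX in
lemma aux_aemeas (hlaw : Measure.map (fun ω => X ω 0) (volume : Measure Ω) = gaussianReal 0 1) :
    AEMeasurable (fun ω => X ω 0) (volume : Measure Ω) := by
  by_contra h
  rw [Measure.map_of_not_aemeasurable h] at hlaw
  have := congrArg (fun μ => μ Set.univ) hlaw
  simp [measure_univ] at this

omit hX in
lemma aux_aemeas1 (hlaw : Measure.map (fun ω => X ω 1) (volume : Measure Ω) = gaussianReal 0 1) :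
    AEMeasurable (fun ω => X ω 1) (volume : Measure Ω) := by
  by_contra h
  rw [Measure.map_of_not_aemeasurable h] at hlaw
  have := congrArg (fun μ => μ Set.univ) hlaw
  simp [measure_univ] at this

omit hX in
lemma aux_int_pow
    (hlaw : Measure.map (fun ω => X ω 0) (volume : Measure Ω) = gaussianReal 0 1) (p : ℕ) :
    Integrable (fun ω => X ω 0 ^ p) (volume : Measure Ω) := by
  have ham := aux_aemeas hlaw
  have h := integrable_pow_gaussianReal 1 p
  rw [← hlaw] at h
  have := (integrable_map_measure
    (by exact (measurable_id.pow_const p).aestronglyMeasurable) ham).mp h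
  simpa [Function.comp_def] using this
end aux

section aux2
variable {Ω : Type} [MeasureSpace Ω] {X : Ω → Fin 2 → ℝ}
  (hlaw0 : Measure.map (fun ω => X ω 0) (volume : Measure Ω) = gaussianReal 0 1)
  (hlaw1 : Measure.map (fun ω => X ω 1) (volume : Measure Ω) = gaussianReal 0 1)
include hlaw0 hlaw1

omit hlaw0 in
lemma aux_int_pow1 (p : ℕ) :
    Integrable (fun ω => X ω 1 ^ p) (volume : Measure Ω) := by
  have ham : AEMeasurable (fun ω => X ω 1) (volume : Measure Ω) := by
    by_contra h
    rw [Measure.map_of_not_aemeasurable h] at hlaw1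
    have := congrArg (fun μ => μ Set.univ) hlaw1
    simp [measure_univ] at this
  have h := integrable_pow_gaussianReal 1 p
  rw [← hlaw1] at h
  have := (integrable_map_measure
    (by exact (measurable_id.pow_const p).aestronglyMeasurable) ham).mp h
  simpa [Function.comp_def] using this

lemma aux_int_prod (p q : ℕ) :
    Integrable (fun ω => X ω 0 ^ p * X ω 1 ^ q) (volume : Measure Ω) := by
  have ham0 := aux_aemeas hlaw0
  have ham1 : AEMeasurable (fun ω => X ω 1) (volume : Measure Ω) := by
    by_contra h
    rw [Measure.map_of_not_aemeasurable h] at hlaw1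
    have := congrArg (fun μ => μ Set.univ) hlaw1
    simp [measure_univ] at this
  have hint : Integrable (fun ω => (1/2 : ℝ) * (X ω 0 ^ (2*p) + X ω 1 ^ (2*q)))
      (volume : Measure Ω) :=
    ((aux_int_pow hlaw0 (2*p)).add (aux_int_pow1 hlaw1 (2*q))).const_mul _
  refine hint.mono' (((ham0.pow_const p).mul (ham1.pow_const q)).aestronglyMeasurable) ?_
  filter_upwards with ω
  have h1 : |X ω 0 ^ p * X ω 1 ^ q| = |X ω 0|^p * |X ω 1|^q := by
    rw [abs_mul, abs_pow, abs_pow]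
  have h2 : (|X ω 0|^p)^2 = X ω 0 ^ (2*p) := by
    rw [← pow_mul, mul_comm p 2, pow_mul, sq_abs, ← pow_mul]
  have h3 : (|X ω 1|^q)^2 = X ω 1 ^ (2*q) := by
    rw [← pow_mul, mul_comm q 2, pow_mul, sq_abs, ← pow_mul]
  have h4 := two_mul_le_add_sq (|X ω 0|^p) (|X ω 1|^q)
  rw [Real.norm_eq_abs, h1]
  nlinarith [abs_nonneg (X ω 0), abs_nonneg (X ω 1)]
end aux2

section aux3
variable {Ω : Type} [MeasureSpace Ω] {X : Ω → Fin 2 → ℝ}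

lemma aux_moment {r t : ℝ}
    (hlawt : Measure.map (fun ω => t * X ω 0 + X ω 1) (volume : Measure Ω)
      = gaussianReal 0 (Real.toNNReal (t ^ 2 + 2 * r * t + 1)))
    (ham : AEMeasurable (fun ω => t * X ω 0 + X ω 1) (volume : Measure Ω))
    (hw : 0 ≤ t ^ 2 + 2 * r * t + 1) (m : ℕ) :
    ∫ ω, (t * X ω 0 + X ω 1) ^ (2 * m)
      = ((2 * m - 1)‼ : ℝ) * (t ^ 2 + 2 * r * t + 1) ^ m := by
  have h1 : ∫ ω, (t * X ω 0 + X ω 1) ^ (2 * m)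
      = ∫ x, x ^ (2 * m) ∂(Measure.map (fun ω => t * X ω 0 + X ω 1) (volume : Measure Ω)) := by
    rw [integral_map ham (by exact (measurable_id.pow_const (2*m)).aestronglyMeasurable)]
  rw [h1, hlawt, integral_even_pow_gaussianReal, Real.coe_toNNReal _ hw]

lemma aux_binom
    (hlaw0 : Measure.map (fun ω => X ω 0) (volume : Measure Ω) = gaussianReal 0 1)
    (hlaw1 : Measure.map (fun ω => X ω 1) (volume : Measure Ω) = gaussianReal 0 1)
    (n : ℕ) (t : ℝ) :
    ∫ ω, (t * X ω 0 + X ω 1) ^ n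
      = ∑ s ∈ Finset.range (n + 1),
          (n.choose s : ℝ) * (∫ ω, X ω 0 ^ s * X ω 1 ^ (n - s)) * t ^ s := by
  have hexp : ∀ ω : Ω, (t * X ω 0 + X ω 1) ^ n
      = ∑ s ∈ Finset.range (n + 1),
          (t ^ s * (n.choose s : ℝ)) * (X ω 0 ^ s * X ω 1 ^ (n - s)) := by
    intro ω
    rw [add_pow]
    refine Finset.sum_congr rfl fun s _ => ?_
    rw [mul_pow]
    ring
  rw [integral_congr_ae (Filter.Eventually.of_forall hexp),
    integral_finset_sum _ (fun s _ => (aux_int_prod hlaw0 hlaw1 s (n - s)).const_mul _)]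
  refine Finset.sum_congr rfl fun s _ => ?_
  rw [integral_const_mul]
  ring
end aux3

/-- For integers `i, j ≥ 1` there is a polynomial `f` with `f(0) = 1` such that whenever `X, Y`
are jointly standard normal with covariance `r`,
`E[X^{2i−1} Y^{2j−1}] = (2i−1)!! (2j−1)!! r f(r²)`. -/
theorem gaussian_odd_mixed_moment (i j : ℕ) (hi : 1 ≤ i) (hj : 1 ≤ j) :
    ∃ f : Polynomial ℝ, f.eval 0 = 1 ∧
      ∀ (Ω : Type) [MeasureSpace Ω] (r : ℝ) (X : Ω → Fin 2 → ℝ),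
        IsCenteredGaussian X !![1, r; r, 1] →
        (∫ ω, (X ω 0) ^ (2 * i - 1) * (X ω 1) ^ (2 * j - 1))
          = ((2 * i - 1)‼ : ℝ) * ((2 * j - 1)‼ : ℝ) * r * f.eval (r ^ 2) := by
  obtain ⟨k, rfl⟩ : ∃ k, i = k + 1 := ⟨i - 1, by omega⟩
  obtain ⟨l, rfl⟩ : ∃ l, j = l + 1 := ⟨j - 1, by omega⟩
  -- notation
  set m : ℕ := k + l + 1 with hm
  set n : ℕ := 2 * m with hn
  set a : ℕ := 2 * k + 1 with ha
  have han : a ≤ n := by omega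
  have hchpos : (0:ℝ) < (n.choose a : ℝ) := by
    exact_mod_cast Nat.choose_pos han
  have hdkpos : (0:ℝ) < ((2 * k + 1)‼ : ℝ) := by exact_mod_cast Nat.doubleFactorial_pos _
  have hdlpos : (0:ℝ) < ((2 * l + 1)‼ : ℝ) := by exact_mod_cast Nat.doubleFactorial_pos _
  set δ : ℕ → ℝ := fun u => ((2 * m - 1)‼ : ℝ) * 2 ^ (2 * u + 1) * (m.choose (2 * u + 1) : ℝ)
      * ((m - (2 * u + 1)).choose (k - u) : ℝ)
      / ((n.choose a : ℝ) * ((2 * k + 1)‼ : ℝ) * ((2 * l + 1)‼ : ℝ)) with hδ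
  refine ⟨∑ u ∈ Finset.range (k + 1), Polynomial.C (δ u) * Polynomial.X ^ u, ?_, ?_⟩
  · -- f.eval 0 = 1
    rw [Polynomial.eval_finset_sum]
    have hz : ∀ u ∈ Finset.range (k + 1), u ≠ 0 →
        (Polynomial.C (δ u) * Polynomial.X ^ u).eval 0 = 0 := by
      intro u _ hu
      simp [zero_pow hu]
    rw [Finset.sum_eq_single_of_mem 0 (Finset.mem_range.mpr (by omega)) hz]
    simp only [Polynomial.eval_mul, Polynomial.eval_C, Polynomial.eval_pow, Polynomial.eval_X,
      pow_zero, mul_one, hδ]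
    have e1 : 2 * m - 1 = 2 * (k + l) + 1 := by omega
    have e2 : m - (2 * 0 + 1) = k + l := by omega
    have e3 : n = 2 * (k + l) + 2 := by omega
    have e4 : m.choose (2 * 0 + 1) = m := by simp
    have e5 : k - 0 = k := by omega
    rw [e1, e2, e4, e5, e3]
    rw [div_eq_one_iff_eq (by positivity)]
    have := realKey k l
    rw [ha]
    push_cast at this ⊢
    have hm' : (m:ℝ) = k + l + 1 := by rw [hm]; push_cast; ring
    rw [hm']
    nlinarith [this]
  · -- main statement
    intro Ω _ r X hX
    have hlaw0 := aux_law0 hX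
    have hlaw1 := aux_law1 hX
    have ham0 := aux_aemeas hlaw0
    have ham1 := aux_aemeas1 hlaw1
    set M : ℕ → ℝ := fun s => ∫ ω, X ω 0 ^ s * X ω 1 ^ (n - s) with hM
    -- the polynomial identity
    set P : Polynomial ℝ := ∑ s ∈ Finset.range (n + 1),
        Polynomial.C ((n.choose s : ℝ) * M s) * Polynomial.X ^ s with hP
    set Q : Polynomial ℝ := Polynomial.C ((2 * m - 1)‼ : ℝ)
        * (Polynomial.X ^ 2 + Polynomial.C (2 * r) * Polynomial.X + 1) ^ m with hQ
    have hPQ : P = Q := by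
      apply Polynomial.eq_of_infinite_eval_eq
      apply Set.Infinite.mono (s := Set.Ioo (-(1 + 2 * |r|)⁻¹) ((1 + 2 * |r|)⁻¹))
      swap
      · refine Set.Ioo_infinite ?_
        have : (0:ℝ) < (1 + 2 * |r|)⁻¹ := by positivity
        linarith
      intro t ht
      simp only [Set.mem_Ioo] at ht
      have hpos : (0:ℝ) < 1 + 2 * |r| := by positivity
      have hab : |t| < (1 + 2 * |r|)⁻¹ := abs_lt.mpr ⟨ht.1, ht.2⟩
      have h2 : |t| * (1 + 2 * |r|) < 1 := by
        calc |t| * (1 + 2 * |r|) < (1 + 2 * |r|)⁻¹ * (1 + 2 * |r|) :=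
              mul_lt_mul_of_pos_right hab hpos
          _ = 1 := inv_mul_cancel₀ (ne_of_gt hpos)
      have h3 : -(|r| * |t|) ≤ r * t := by
        rw [← abs_mul]
        exact neg_abs_le _
      have hw : 0 ≤ t ^ 2 + 2 * r * t + 1 := by
        nlinarith [sq_abs t, abs_nonneg t, abs_nonneg r]
      have hkey : ∑ s ∈ Finset.range (n + 1), (n.choose s : ℝ) * M s * t ^ s
          = ((2 * m - 1)‼ : ℝ) * (t ^ 2 + 2 * r * t + 1) ^ m := by
        rw [← aux_binom hlaw0 hlaw1 n t, hn,
          aux_moment (aux_law hX t) ((ham0.const_mul t).add ham1) hw m]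
      simp only [Set.mem_setOf_eq, hP, hQ, Polynomial.eval_finset_sum, Polynomial.eval_mul,
        Polynomial.eval_C, Polynomial.eval_pow, Polynomial.eval_X, Polynomial.eval_add,
        Polynomial.eval_one]
      rw [hkey]
    have hcoeff := congrArg (fun p : Polynomial ℝ => p.coeff a) hPQ
    simp only [hP, hQ, Polynomial.finset_sum_coeff, Polynomial.coeff_C_mul,
      Polynomial.coeff_X_pow, mul_ite, mul_one, mul_zero] at hcoeff
    rw [Finset.sum_ite_eq, if_pos (Finset.mem_range.mpr (by omega)), ha, coeff_poly r m k] at hcoeff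
    -- now hcoeff : (n.choose a) * M a = (2m-1)!! * ∑ ...
    have e1 : 2 * (k + 1) - 1 = a := by omega
    have e2 : 2 * (l + 1) - 1 = n - a := by omega
    rw [e1, e2]
    show M a = ((a)‼ : ℝ) * (((n - a))‼ : ℝ) * r * _
    have e3 : n - a = 2 * l + 1 := by omega
    rw [e3, Polynomial.eval_finset_sum]
    simp only [Polynomial.eval_mul, Polynomial.eval_C, Polynomial.eval_pow, Polynomial.eval_X, ha]
    apply mul_left_cancel₀ (ne_of_gt hchpos)
    rw [hcoeff, Finset.mul_sum]
    have hr : ∀ S : ℝ, (n.choose a : ℝ) * (((2*k+1)‼ : ℝ) * ((2*l+1)‼ : ℝ) * r * S)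
        = ((n.choose a : ℝ) * ((2*k+1)‼ : ℝ) * ((2*l+1)‼ : ℝ) * r) * S := fun S => by ring
    rw [← ha, hr, Finset.mul_sum]
    refine Finset.sum_congr rfl fun u hu => ?_
    rw [hδ]
    simp only
    rw [div_eq_mul_inv]
    field_simp
    ring
end

section
/- Let (Uᵢ,Vᵢ), i = 1..k (k ≥ 2), be independent random vectors with C := 3∏ᵢ(1 + ‖Uᵢ‖_k)(1 + ‖Vᵢ‖_k) < ∞. Then |Cov(∏ᵢUᵢ, ∏ᵢVᵢ)| ≤ C^k · ∑ᵢ |Cov(Uᵢ, Vᵢ)|. -/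
open MeasureTheory ProbabilityTheory

lemma tele_aux {ι : Type*} [DecidableEq ι] (a b M : ι → ℝ) (hM : ∀ i, 1 ≤ M i)
    (ha : ∀ i, |a i| ≤ M i) (hb : ∀ i, |b i| ≤ M i) (s : Finset ι) :
    |∏ i ∈ s, a i - ∏ i ∈ s, b i| ≤ (∏ i ∈ s, M i) * ∑ i ∈ s, |a i - b i| := by
  induction s using Finset.induction with
  | empty => simp
  | @insert i s hi ih =>
    rw [Finset.prod_insert hi, Finset.prod_insert hi, Finset.prod_insert hi,
      Finset.sum_insert hi]
    have hP : (0:ℝ) ≤ ∏ j ∈ s, M j :=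
      Finset.prod_nonneg fun j _ => le_trans zero_le_one (hM j)
    have hPb : |∏ j ∈ s, b j| ≤ ∏ j ∈ s, M j := by
      rw [Finset.abs_prod]
      exact Finset.prod_le_prod (fun j _ => abs_nonneg _) (fun j _ => hb j)
    have tri : |a i * ∏ j ∈ s, a j - b i * ∏ j ∈ s, b j|
        ≤ |a i| * |∏ j ∈ s, a j - ∏ j ∈ s, b j| + |a i - b i| * |∏ j ∈ s, b j| := by
      have h : a i * ∏ j ∈ s, a j - b i * ∏ j ∈ s, b j
          = a i * (∏ j ∈ s, a j - ∏ j ∈ s, b j) + (a i - b i) * ∏ j ∈ s, b j := by ring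
      rw [h]
      exact (abs_add_le _ _).trans (by rw [abs_mul, abs_mul])
    have hS : (0:ℝ) ≤ ∑ j ∈ s, |a j - b j| := Finset.sum_nonneg fun j _ => abs_nonneg _
    calc |a i * ∏ j ∈ s, a j - b i * ∏ j ∈ s, b j|
        ≤ |a i| * |∏ j ∈ s, a j - ∏ j ∈ s, b j| + |a i - b i| * |∏ j ∈ s, b j| := tri
      _ ≤ M i * ((∏ j ∈ s, M j) * ∑ j ∈ s, |a j - b j|) + |a i - b i| * ∏ j ∈ s, M j :=
          add_le_add (mul_le_mul (ha i) ih (abs_nonneg _) (le_trans zero_le_one (hM i)))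
            (mul_le_mul_of_nonneg_left hPb (abs_nonneg _))
      _ ≤ (M i * ∏ j ∈ s, M j) * (|a i - b i| + ∑ j ∈ s, |a j - b j|) := by
          nlinarith [mul_nonneg (mul_nonneg (sub_nonneg.mpr (hM i)) hP) (abs_nonneg (a i - b i))]

lemma one_add_pow_aux (x : ℝ) (hx : 0 ≤ x) (k : ℕ) (hk : 1 ≤ k) : 1 + x ^ k ≤ (1 + x) ^ k := by
  induction k with
  | zero => omega
  | succ n ih =>
    rcases Nat.eq_or_lt_of_le hk with h | h
    · simp [← h]
    · have hn : 1 ≤ n := by omega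
      have ihn := ih hn
      have hxn : 0 ≤ x ^ n := pow_nonneg hx n
      calc 1 + x ^ (n + 1) ≤ (1 + x ^ n) * (1 + x) := by nlinarith [pow_succ x n]
        _ ≤ (1 + x) ^ n * (1 + x) :=
            mul_le_mul_of_nonneg_right ihn (by linarith)
        _ = (1 + x) ^ (n + 1) := (pow_succ _ _).symm

lemma iIndepFun_congr_aux {Ω ι : Type*} {mΩ : MeasurableSpace Ω} {μ : Measure Ω}
    {β : ι → Type*} {m : ∀ i, MeasurableSpace (β i)} {f g : ∀ i, Ω → β i}
    (h : iIndepFun f μ) (hfg : ∀ i, f i =ᵐ[μ] g i) : iIndepFun g μ := by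
  rw [iIndepFun_iff_measure_inter_preimage_eq_mul] at h ⊢
  intro S sets hsets
  have hae : ∀ᵐ ω ∂μ, ∀ i ∈ S, f i ω = g i ω :=
    (ae_ball_iff S.countable_toSet).2 fun i _ => hfg i
  have h1 : μ (⋂ i ∈ S, g i ⁻¹' sets i) = μ (⋂ i ∈ S, f i ⁻¹' sets i) := by
    refine measure_congr ?_
    filter_upwards [hae] with ω hω
    show (ω ∈ ⋂ i ∈ S, g i ⁻¹' sets i) = (ω ∈ ⋂ i ∈ S, f i ⁻¹' sets i)
    simp only [Set.mem_iInter, Set.mem_preimage, eq_iff_iff]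
    exact ⟨fun H j hj => (hω j hj) ▸ H j hj, fun H j hj => (hω j hj).symm ▸ H j hj⟩
  rw [h1, h S hsets]
  refine Finset.prod_congr rfl fun i hi => ?_
  refine measure_congr ?_
  filter_upwards [hfg i] with ω hω
  show (ω ∈ f i ⁻¹' sets i) = (ω ∈ g i ⁻¹' sets i)
  simp only [Set.mem_preimage]
  rw [hω]

lemma integral_prod_aux {Ω : Type*} {mΩ : MeasurableSpace Ω} {μ : Measure Ω}
    [IsProbabilityMeasure μ] {ι : Type*} [DecidableEq ι] (f : ι → Ω → ℝ) (hf : ∀ i, Measurable (f i))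
    (hindep : iIndepFun f μ) (s : Finset ι) :
    ∫ ω, ∏ i ∈ s, f i ω ∂μ = ∏ i ∈ s, ∫ ω, f i ω ∂μ := by
  induction s using Finset.induction with
  | empty => simp
  | @insert i s hi ih =>
    rw [Finset.prod_insert hi, ← ih]
    simp_rw [Finset.prod_insert hi]
    have hIF : IndepFun (f i) (∏ j ∈ s, f j) μ :=
      (hindep.indepFun_finsetProd_of_notMem hf hi).symm
    have hProdEq : (∏ j ∈ s, f j) = fun ω => ∏ j ∈ s, f j ω := by
      funext ω; simp [Finset.prod_apply]
    rw [hProdEq] at hIF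
    exact hIF.integral_fun_mul_eq_mul_integral (hf i).aestronglyMeasurable
      (Finset.measurable_prod s fun j _ => hf j).aestronglyMeasurable

lemma sq_le_one_add_pow_aux (x : ℝ) (hx : 0 ≤ x) (k : ℕ) (hk : 2 ≤ k) : x ^ 2 ≤ 1 + x ^ k := by
  rcases le_or_gt x 1 with h | h
  · have : x ^ 2 ≤ 1 := pow_le_one₀ hx h
    have : 0 ≤ x ^ k := pow_nonneg hx k
    linarith
  · have h2 : x ^ 2 ≤ x ^ k := pow_le_pow_right₀ h.le hk
    have : 0 ≤ x ^ k := pow_nonneg hx k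
    linarith

lemma le_one_add_pow_aux (x : ℝ) (hx : 0 ≤ x) (k : ℕ) (hk : 2 ≤ k) : x ≤ 1 + x ^ k := by
  rcases le_or_gt x 1 with h | h
  · have : 0 ≤ x ^ k := pow_nonneg hx k
    linarith
  · have h2 : x ≤ x ^ k := le_self_pow₀ h.le (by omega)
    linarith

/-- Let `(Uᵢ,Vᵢ)`, `i = 1,…,k` (`k ≥ 2`), be independent random vectors, each coordinate in `Lᵏ`,
and set `C = 3 ∏ᵢ (1 + ‖Uᵢ‖ₖ)(1 + ‖Vᵢ‖ₖ)` where `‖ξ‖ₖ = (E|ξ|ᵏ)^{1/k}`. Then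
`|Cov(∏ᵢ Uᵢ, ∏ᵢ Vᵢ)| ≤ Cᵏ ∑ᵢ |Cov(Uᵢ, Vᵢ)|`. -/
theorem abs_cov_prod_le {Ω : Type*} [MeasureSpace Ω]
    [IsProbabilityMeasure (volume : Measure Ω)]
    (k : ℕ) (hk : 2 ≤ k) (U V : Fin k → Ω → ℝ)
    (hU : ∀ i, MemLp (U i) k volume) (hV : ∀ i, MemLp (V i) k volume)
    (hindep : iIndepFun
      (fun i ω => (U i ω, V i ω)) (volume : Measure Ω)) :
    |(∫ ω, (∏ i, U i ω) * ∏ i, V i ω) - (∫ ω, ∏ i, U i ω) * (∫ ω, ∏ i, V i ω)|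
      ≤ (3 * ∏ i, (1 + (∫ ω, |U i ω| ^ k) ^ ((k : ℝ)⁻¹))
            * (1 + (∫ ω, |V i ω| ^ k) ^ ((k : ℝ)⁻¹))) ^ k
        * ∑ i, |(∫ ω, U i ω * V i ω) - (∫ ω, U i ω) * (∫ ω, V i ω)| := by
  have hk0 : k ≠ 0 := by omega
  -- measurable representatives
  have hWm : ∀ i, AEMeasurable (fun ω => (U i ω, V i ω)) (volume : Measure Ω) := fun i =>
    ((hU i).aestronglyMeasurable.aemeasurable).prodMk ((hV i).aestronglyMeasurable.aemeasurable)
  set W' : Fin k → Ω → ℝ × ℝ := fun i => (hWm i).mk _ with hW'def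
  have hW'meas : ∀ i, Measurable (W' i) := fun i => (hWm i).measurable_mk
  have hW'ae : ∀ i, (fun ω => (U i ω, V i ω)) =ᵐ[volume] W' i := fun i => (hWm i).ae_eq_mk
  set U' : Fin k → Ω → ℝ := fun i ω => (W' i ω).1 with hU'def
  set V' : Fin k → Ω → ℝ := fun i ω => (W' i ω).2 with hV'def
  have hU'ae : ∀ i, U i =ᵐ[volume] U' i := fun i =>
    (hW'ae i).mono fun ω h => congrArg Prod.fst h
  have hV'ae : ∀ i, V i =ᵐ[volume] V' i := fun i =>
    (hW'ae i).mono fun ω h => congrArg Prod.snd h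
  have hU'meas : ∀ i, Measurable (U' i) := fun i => measurable_fst.comp (hW'meas i)
  have hV'meas : ∀ i, Measurable (V' i) := fun i => measurable_snd.comp (hW'meas i)
  have hindep' : iIndepFun W' (volume : Measure Ω) :=
    iIndepFun_congr_aux hindep hW'ae
  have hindepU : iIndepFun U' (volume : Measure Ω) :=
    hindep'.comp (fun _ => Prod.fst) (fun _ => measurable_fst)
  have hindepV : iIndepFun V' (volume : Measure Ω) :=
    hindep'.comp (fun _ => Prod.snd) (fun _ => measurable_snd)
  have hindepUV : iIndepFun (fun i ω => U' i ω * V' i ω)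
      (volume : Measure Ω) :=
    hindep'.comp (fun _ p => p.1 * p.2) (fun _ => measurable_fst.mul measurable_snd)
  -- product integral identities
  have hPU : (∫ ω, ∏ i, U i ω) = ∏ i, ∫ ω, U i ω := by
    have hae : ∀ᵐ ω ∂(volume : Measure Ω), ∀ i, U i ω = U' i ω :=
      (ae_all_iff).2 fun i => hU'ae i
    calc (∫ ω, ∏ i, U i ω) = ∫ ω, ∏ i, U' i ω := by
          refine integral_congr_ae ?_
          filter_upwards [hae] with ω hω
          exact Finset.prod_congr rfl fun i _ => hω i
      _ = ∏ i, ∫ ω, U' i ω := integral_prod_aux U' hU'meas hindepU Finset.univ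
      _ = ∏ i, ∫ ω, U i ω := Finset.prod_congr rfl fun i _ =>
          (integral_congr_ae (hU'ae i)).symm
  have hPV : (∫ ω, ∏ i, V i ω) = ∏ i, ∫ ω, V i ω := by
    have hae : ∀ᵐ ω ∂(volume : Measure Ω), ∀ i, V i ω = V' i ω :=
      (ae_all_iff).2 fun i => hV'ae i
    calc (∫ ω, ∏ i, V i ω) = ∫ ω, ∏ i, V' i ω := by
          refine integral_congr_ae ?_
          filter_upwards [hae] with ω hω
          exact Finset.prod_congr rfl fun i _ => hω i
      _ = ∏ i, ∫ ω, V' i ω := integral_prod_aux V' hV'meas hindepV Finset.univ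
      _ = ∏ i, ∫ ω, V i ω := Finset.prod_congr rfl fun i _ =>
          (integral_congr_ae (hV'ae i)).symm
  have hPUV : (∫ ω, (∏ i, U i ω) * ∏ i, V i ω) = ∏ i, ∫ ω, U i ω * V i ω := by
    have hae : ∀ᵐ ω ∂(volume : Measure Ω), ∀ i, U i ω = U' i ω ∧ V i ω = V' i ω :=
      (ae_all_iff).2 fun i => ((hU'ae i).and (hV'ae i))
    calc (∫ ω, (∏ i, U i ω) * ∏ i, V i ω) = ∫ ω, ∏ i, U' i ω * V' i ω := by
          refine integral_congr_ae ?_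
          filter_upwards [hae] with ω hω
          rw [← Finset.prod_mul_distrib]
          exact Finset.prod_congr rfl fun i _ => by rw [(hω i).1, (hω i).2]
      _ = ∏ i, ∫ ω, U' i ω * V' i ω :=
          integral_prod_aux (fun i ω => U' i ω * V' i ω)
            (fun i => (hU'meas i).mul (hV'meas i)) hindepUV Finset.univ
      _ = ∏ i, ∫ ω, U i ω * V i ω := by
          refine Finset.prod_congr rfl fun i _ => ?_
          refine integral_congr_ae ?_
          filter_upwards [hU'ae i, hV'ae i] with ω h1 h2
          rw [h1, h2]
  rw [hPU, hPV, hPUV, ← Finset.prod_mul_distrib]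
  -- abbreviations
  set a : Fin k → ℝ := fun i => ∫ ω, U i ω * V i ω with hadef
  set b : Fin k → ℝ := fun i => (∫ ω, U i ω) * ∫ ω, V i ω with hbdef
  set α : Fin k → ℝ := fun i => ∫ ω, |U i ω| ^ k with hαdef
  set β : Fin k → ℝ := fun i => ∫ ω, |V i ω| ^ k with hβdef
  have hα0 : ∀ i, 0 ≤ α i := fun i => integral_nonneg fun ω => pow_nonneg (abs_nonneg _) k
  have hβ0 : ∀ i, 0 ≤ β i := fun i => integral_nonneg fun ω => pow_nonneg (abs_nonneg _) k
  have hIntUk : ∀ i, Integrable (fun ω => |U i ω| ^ k) (volume : Measure Ω) := by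
    intro i
    have := (hU i).integrable_norm_rpow (by exact_mod_cast hk0) (ENNReal.natCast_ne_top k)
    simpa only [ENNReal.toReal_natCast, Real.norm_eq_abs, Real.rpow_natCast] using this
  have hIntVk : ∀ i, Integrable (fun ω => |V i ω| ^ k) (volume : Measure Ω) := by
    intro i
    have := (hV i).integrable_norm_rpow (by exact_mod_cast hk0) (ENNReal.natCast_ne_top k)
    simpa only [ENNReal.toReal_natCast, Real.norm_eq_abs, Real.rpow_natCast] using this
  set M : Fin k → ℝ := fun i => (1 + α i) * (1 + β i) with hMdef
  have habsint : ∀ f : Ω → ℝ, |∫ ω, f ω| ≤ ∫ ω, |f ω| := fun f => by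
    simpa [Real.norm_eq_abs] using
      norm_integral_le_integral_norm (μ := (volume : Measure Ω)) f
  have hM1 : ∀ i, 1 ≤ M i := fun i => by
    simp only [hMdef]; nlinarith [hα0 i, hβ0 i]
  -- bound on |a i|
  have ha : ∀ i, |a i| ≤ M i := by
    intro i
    have hg : Integrable (fun ω => 1 + (|U i ω| ^ k + |V i ω| ^ k) / 2)
        (volume : Measure Ω) :=
      (integrable_const 1).add (((hIntUk i).add (hIntVk i)).div_const 2)
    have h1 : |a i| ≤ ∫ ω, |U i ω * V i ω| := habsint _
    have h2 : (∫ ω, |U i ω * V i ω|) ≤ ∫ ω, (1 + (|U i ω| ^ k + |V i ω| ^ k) / 2) := by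
      refine integral_mono_of_nonneg (Filter.Eventually.of_forall fun ω => abs_nonneg _) hg
        (Filter.Eventually.of_forall fun ω => ?_)
      have hu := sq_le_one_add_pow_aux |U i ω| (abs_nonneg _) k hk
      have hv := sq_le_one_add_pow_aux |V i ω| (abs_nonneg _) k hk
      have habs : |U i ω * V i ω| = |U i ω| * |V i ω| := abs_mul _ _
      nlinarith [sq_nonneg (|U i ω| - |V i ω|)]
    have hg2 : Integrable (fun ω => (|U i ω| ^ k + |V i ω| ^ k) / 2) (volume : Measure Ω) := by
      exact ((hIntUk i).add (hIntVk i)).div_const 2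
    have hg3 : Integrable (fun ω => |U i ω| ^ k + |V i ω| ^ k) (volume : Measure Ω) := by
      exact (hIntUk i).add (hIntVk i)
    have h3 : (∫ ω, (1 + (|U i ω| ^ k + |V i ω| ^ k) / 2)) = 1 + (α i + β i) / 2 := by
      rw [integral_add (integrable_const 1) hg2, integral_const, integral_div,
        integral_add (hIntUk i) (hIntVk i)]
      simp [hαdef, hβdef]
    have h4 := h1.trans (h2.trans_eq h3)
    simp only [hMdef]
    nlinarith [hα0 i, hβ0 i, mul_nonneg (hα0 i) (hβ0 i)]
  -- bound on |b i|
  have hb : ∀ i, |b i| ≤ M i := by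
    intro i
    have hgU : Integrable (fun ω => 1 + |U i ω| ^ k) (volume : Measure Ω) := by
      exact (integrable_const 1).add (hIntUk i)
    have hu1 : |∫ ω, U i ω| ≤ 1 + α i := by
      refine (habsint _).trans ?_
      refine (integral_mono_of_nonneg (Filter.Eventually.of_forall fun ω => abs_nonneg _)
        hgU (Filter.Eventually.of_forall fun ω =>
          le_one_add_pow_aux |U i ω| (abs_nonneg _) k hk)).trans_eq ?_
      rw [integral_add (integrable_const 1) (hIntUk i), integral_const]
      simp [hαdef]
    have hgV : Integrable (fun ω => 1 + |V i ω| ^ k) (volume : Measure Ω) := by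
      exact (integrable_const 1).add (hIntVk i)
    have hv1 : |∫ ω, V i ω| ≤ 1 + β i := by
      refine (habsint _).trans ?_
      refine (integral_mono_of_nonneg (Filter.Eventually.of_forall fun ω => abs_nonneg _)
        hgV (Filter.Eventually.of_forall fun ω =>
          le_one_add_pow_aux |V i ω| (abs_nonneg _) k hk)).trans_eq ?_
      rw [integral_add (integrable_const 1) (hIntVk i), integral_const]
      simp [hβdef]
    calc |b i| = |∫ ω, U i ω| * |∫ ω, V i ω| := abs_mul _ _
      _ ≤ (1 + α i) * (1 + β i) :=
          mul_le_mul hu1 hv1 (abs_nonneg _) (by linarith [hα0 i])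
  -- telescoping bound
  have htele := tele_aux a b M hM1 ha hb Finset.univ
  refine htele.trans ?_
  have hsum0 : (0:ℝ) ≤ ∑ i, |a i - b i| := Finset.sum_nonneg fun i _ => abs_nonneg _
  refine mul_le_mul_of_nonneg_right ?_ hsum0
  -- ∏ M ≤ (3 ∏ (1+α^{1/k})(1+β^{1/k}))^k
  set c : Fin k → ℝ := fun i => (1 + α i ^ ((k:ℝ)⁻¹)) * (1 + β i ^ ((k:ℝ)⁻¹)) with hcdef
  have hc0 : ∀ i, 0 ≤ c i := fun i =>
    mul_nonneg (by positivity) (by positivity)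
  have hMc : ∀ i, M i ≤ c i ^ k := by
    intro i
    have hαr : (α i ^ ((k:ℝ)⁻¹)) ^ k = α i := Real.rpow_inv_natCast_pow (hα0 i) hk0
    have hβr : (β i ^ ((k:ℝ)⁻¹)) ^ k = β i := Real.rpow_inv_natCast_pow (hβ0 i) hk0
    have h1 : 1 + α i ≤ (1 + α i ^ ((k:ℝ)⁻¹)) ^ k := by
      conv_lhs => rw [← hαr]
      exact one_add_pow_aux _ (Real.rpow_nonneg (hα0 i) _) k (by omega)
    have h2 : 1 + β i ≤ (1 + β i ^ ((k:ℝ)⁻¹)) ^ k := by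
      conv_lhs => rw [← hβr]
      exact one_add_pow_aux _ (Real.rpow_nonneg (hβ0 i) _) k (by omega)
    calc M i = (1 + α i) * (1 + β i) := rfl
      _ ≤ (1 + α i ^ ((k:ℝ)⁻¹)) ^ k * (1 + β i ^ ((k:ℝ)⁻¹)) ^ k :=
          mul_le_mul h1 h2 (by linarith [hβ0 i]) (pow_nonneg (by positivity) k)
      _ = c i ^ k := (mul_pow _ _ k).symm
  calc ∏ i, M i ≤ ∏ i, c i ^ k :=
        Finset.prod_le_prod (fun i _ => le_trans zero_le_one (hM1 i)) (fun i _ => hMc i)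
    _ = (∏ i, c i) ^ k := by rw [Finset.prod_pow]
    _ ≤ (3 * ∏ i, c i) ^ k := by
        refine pow_le_pow_left₀ (Finset.prod_nonneg fun i _ => hc0 i) ?_ k
        nlinarith [Finset.prod_nonneg (fun i (_ : i ∈ Finset.univ) => hc0 i)]
end

section
/- Let M be a p×p correlation matrix (symmetric positive semidefinite with all diagonal entries 1) with eigenvalues λ₁ ≥ ⋯ ≥ λ_p. Then λ₁+⋯+λ_k ≥ k for each 1 ≤ k ≤ p, and λ₁+⋯+λ_p = p. Conversely, for any τ₁ ≥ ⋯ ≥ τ_p ≥ 0 satisfying τ₁+⋯+τ_k ≥ k for all k and ∑τᵢ = p, there exists a correlation matrix with eigenvalues τ₁,…,τ_p. -/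
open Finset

section CorrelationAux

open Polynomial Matrix


lemma exists_perm_of_map_eq : ∀ {n : ℕ} (f g : Fin n → ℝ),
    Multiset.map f Finset.univ.val = Multiset.map g Finset.univ.val →
    ∃ σ : Equiv.Perm (Fin n), ∀ i, f i = g (σ i) := by
  intro n
  induction n with
  | zero => intro f g _; exact ⟨1, fun i => i.elim0⟩
  | succ n ih =>
    intro f g h
    have h0 : f 0 ∈ Multiset.map g Finset.univ.val := by
      rw [← h]; exact Multiset.mem_map_of_mem f (Finset.mem_univ_val _)
    obtain ⟨j, -, hj⟩ := Multiset.mem_map.1 h0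
    have huniv : (Finset.univ.val : Multiset (Fin (n+1)))
        = 0 ::ₘ Multiset.map Fin.succ Finset.univ.val := by
      rw [Fin.univ_succ, Finset.cons_val, Finset.map_val]; rfl
    have hunivj : (Finset.univ.val : Multiset (Fin (n+1)))
        = j ::ₘ Multiset.map j.succAbove Finset.univ.val := by
      rw [Fin.univ_succAbove, Finset.cons_val, Finset.map_val]; rfl
    have key : f 0 ::ₘ Multiset.map (f ∘ Fin.succ) Finset.univ.val
        = f 0 ::ₘ Multiset.map (g ∘ j.succAbove) Finset.univ.val := by
      rw [← Multiset.map_map, ← Multiset.map_map, ← Multiset.map_cons, ← hj,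
        ← Multiset.map_cons, ← huniv, ← hunivj, h]
    have h' := (Multiset.cons_inj_right (f 0)).1 key
    obtain ⟨σ', hσ'⟩ := ih _ _ h'
    refine ⟨(finSuccEquiv n).trans (σ'.optionCongr.trans (finSuccEquiv' j).symm), ?_⟩
    intro i
    induction i using Fin.cases with
    | zero => simpa using hj.symm
    | succ i => simpa using hσ' i


variable {p : ℕ}

lemma charpoly_diag (d : Fin p → ℝ) :
    (Matrix.diagonal d).charpoly = ∏ i, (X - C (d i)) := by
  rw [Matrix.charpoly]
  have : charmatrix (Matrix.diagonal d) = Matrix.diagonal (fun i => X - C (d i)) := by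
    ext i j
    by_cases h : i = j
    · subst h; simp
    · simp [h, Matrix.diagonal_apply_ne _ h]
  rw [this, Matrix.det_diagonal]

lemma charpoly_conj_orth (G Q M : Matrix (Fin p) (Fin p) ℝ) (h1 : G * Q = 1) :
    (G * M * Q).charpoly = M.charpoly := by
  have hmapone : (G.map (C : ℝ →+* ℝ[X])) * (Q.map C) = 1 := by
    rw [← Matrix.map_mul, h1]; simp
  have hc : charmatrix (G * M * Q)
      = (G.map C) * charmatrix M * (Q.map C) := by
    unfold charmatrix
    rw [Matrix.mul_sub, Matrix.sub_mul]
    congr 1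
    · rw [mul_assoc, (Matrix.scalar_commute (X : ℝ[X]) (Commute.all _) (Q.map C)).eq, ← mul_assoc,
        hmapone, one_mul]
    · simp [RingHom.mapMatrix_apply, Matrix.map_mul]
  have hdet : (G.map (C : ℝ →+* ℝ[X])).det * (Q.map C).det = 1 := by
    rw [← Matrix.det_mul, hmapone, Matrix.det_one]
  rw [Matrix.charpoly, Matrix.charpoly, hc, Matrix.det_mul, Matrix.det_mul]
  calc (G.map (C : ℝ →+* ℝ[X])).det * (charmatrix M).det * (Q.map C).det
      = (G.map (C : ℝ →+* ℝ[X])).det * (Q.map C).det * (charmatrix M).det := by ring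
    _ = (charmatrix M).det := by rw [hdet, one_mul]


variable {p : ℕ}

/-- Givens rotation in the (a,b) plane. -/
def givens (a b : Fin p) (c s : ℝ) : Matrix (Fin p) (Fin p) ℝ := fun i j =>
  if i = a then (if j = a then c else if j = b then s else 0)
  else if i = b then (if j = a then -s else if j = b then c else 0)
  else (if j = i then 1 else 0)

variable {a b : Fin p} {c s : ℝ}

lemma givens_row_sum (hab : a ≠ b) (x : Fin p → ℝ) (i : Fin p) :
    ∑ k, givens a b c s i k * x k =
      if i = a then c * x a + s * x b
      else if i = b then -s * x a + c * x b else x i := by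
  by_cases hia : i = a
  · rw [if_pos hia, ← Finset.sum_subset (Finset.subset_univ ({a, b} : Finset (Fin p)))
      (fun k _ hk => ?_), Finset.sum_pair hab]
    · simp [givens, hia, hab, (Ne.symm hab)]
    · simp only [Finset.mem_insert, Finset.mem_singleton, not_or] at hk
      simp [givens, hia, hk.1, hk.2, fun h : k = i => hk.1 (h.trans hia)]
  · by_cases hib : i = b
    · rw [if_neg hia, if_pos hib, ← Finset.sum_subset (Finset.subset_univ ({a, b} : Finset (Fin p)))
        (fun k _ hk => ?_), Finset.sum_pair hab]
      · simp [givens, hia, hib, hab, Ne.symm hab]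
      · simp only [Finset.mem_insert, Finset.mem_singleton, not_or] at hk
        simp [givens, hia, hib, hk.1, hk.2, fun h : k = i => hk.2 (h.trans hib)]
    · rw [if_neg hia, if_neg hib, ← Finset.sum_subset (Finset.subset_univ ({i} : Finset (Fin p)))
        (fun k _ hk => ?_), Finset.sum_singleton]
      · simp [givens, hia, hib]
      · simp only [Finset.mem_singleton] at hk
        simp [givens, hia, hib, hk, Ne.symm hk]

lemma givens_mul_apply (hab : a ≠ b) (M : Matrix (Fin p) (Fin p) ℝ) (i j : Fin p) :
    (givens a b c s * M) i j =
      if i = a then c * M a j + s * M b j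
      else if i = b then -s * M a j + c * M b j else M i j := by
  rw [Matrix.mul_apply]
  exact givens_row_sum hab (fun k => M k j) i

lemma mul_givens_transpose_apply (hab : a ≠ b) (M : Matrix (Fin p) (Fin p) ℝ) (i j : Fin p) :
    (M * (givens a b c s)ᵀ) i j =
      if j = a then c * M i a + s * M i b
      else if j = b then -s * M i a + c * M i b else M i j := by
  rw [Matrix.mul_apply]
  simp only [Matrix.transpose_apply]
  simp_rw [mul_comm (M i _)]
  exact givens_row_sum hab (fun k => M i k) j

lemma givens_orth (hab : a ≠ b) (hcs : c ^ 2 + s ^ 2 = 1) :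
    givens a b c s * (givens a b c s)ᵀ = 1 := by
  ext i j
  rw [mul_givens_transpose_apply hab]
  by_cases hja : j = a <;> by_cases hjb : j = b <;>
    by_cases hia : i = a <;> by_cases hib : i = b <;>
      simp_all [givens, Matrix.one_apply, Ne.symm, eq_comm] <;> nlinarith [hcs]

/-- Key induction: any symmetric matrix whose diagonal is 1 off `S` and sums correctly on `S`
can be orthogonally conjugated to have unit diagonal. -/
lemma key_induction (S : Finset (Fin p)) :
    ∀ M : Matrix (Fin p) (Fin p) ℝ, M.IsSymm →
    (∀ i, i ∉ S → M i i = 1) → (∑ i ∈ S, M i i = S.card) →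
    ∃ G : Matrix (Fin p) (Fin p) ℝ, G * Gᵀ = 1 ∧ ∀ i, (G * M * Gᵀ) i i = 1 := by
  induction S using Finset.strongInduction with
  | _ S ih =>
  intro M hsymm hout hsum
  by_cases hall : ∀ i ∈ S, M i i = 1
  · refine ⟨1, by simp, fun i => ?_⟩
    simp only [Matrix.transpose_one, Matrix.mul_one, Matrix.one_mul]
    by_cases hi : i ∈ S
    · exact hall i hi
    · exact hout i hi
  · push_neg at hall
    obtain ⟨e, heS, he⟩ := hall
    -- find a with M a a < 1 and b with M b b > 1
    have hexa : ∃ x ∈ S, M x x < 1 := by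
      by_contra hc
      push_neg at hc
      have hstrict : (S.card : ℝ) < ∑ i ∈ S, M i i := by
        have := Finset.sum_lt_sum (f := fun _ : Fin p => (1:ℝ)) (g := fun i => M i i)
          (fun i hi => hc i hi) ⟨e, heS, lt_of_le_of_ne (hc e heS) (Ne.symm he)⟩
        simpa using this
      rw [hsum] at hstrict; exact lt_irrefl _ hstrict
    have hexb : ∃ x ∈ S, 1 < M x x := by
      by_contra hc
      push_neg at hc
      obtain ⟨a, haS, ha⟩ := hexa
      have hstrict : ∑ i ∈ S, M i i < (S.card : ℝ) := by
        have := Finset.sum_lt_sum (f := fun i => M i i) (g := fun _ : Fin p => (1:ℝ))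
          (fun i hi => hc i hi) ⟨a, haS, ha⟩
        simpa using this
      rw [hsum] at hstrict; exact lt_irrefl _ hstrict
    obtain ⟨a, haS, ha⟩ := hexa
    obtain ⟨b, hbS, hb⟩ := hexb
    have hab : a ≠ b := fun h => by rw [h] at ha; linarith
    -- IVT to find the angle
    have hcont : ContinuousOn (fun θ : ℝ =>
        (Real.cos θ)^2 * M a a + 2 * (Real.cos θ) * (Real.sin θ) * M a b
          + (Real.sin θ)^2 * M b b) (Set.Icc 0 (Real.pi/2)) := by
      fun_prop
    have h0 : (fun θ : ℝ => (Real.cos θ)^2 * M a a + 2 * (Real.cos θ) * (Real.sin θ) * M a b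
        + (Real.sin θ)^2 * M b b) 0 = M a a := by simp
    have hpi : (fun θ : ℝ => (Real.cos θ)^2 * M a a + 2 * (Real.cos θ) * (Real.sin θ) * M a b
        + (Real.sin θ)^2 * M b b) (Real.pi/2) = M b b := by simp
    have hIcc := intermediate_value_Icc (by positivity : (0:ℝ) ≤ Real.pi/2) hcont
    have h1mem : (1:ℝ) ∈ Set.Icc (Real.cos 0 ^ 2 * M a a + 2 * Real.cos 0 * Real.sin 0 * M a b
        + Real.sin 0 ^ 2 * M b b) (Real.cos (Real.pi/2) ^ 2 * M a a
        + 2 * Real.cos (Real.pi/2) * Real.sin (Real.pi/2) * M a b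
        + Real.sin (Real.pi/2) ^ 2 * M b b) := by
      constructor <;> simp <;> linarith
    obtain ⟨θ, -, hθ⟩ := hIcc h1mem
    set c := Real.cos θ
    set s := Real.sin θ
    have hcs : c ^ 2 + s ^ 2 = 1 := by
      rw [← Real.sin_sq_add_cos_sq θ]; ring
    set G₁ := givens a b c s with hG₁
    set N := G₁ * M * G₁ᵀ with hN
    -- entries of N
    have hNentry : ∀ i j, N i j =
        (if j = a then c * ((if i = a then c * M a a + s * M b a
            else if i = b then -s * M a a + c * M b a else M i a))
            + s * ((if i = a then c * M a b + s * M b b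
            else if i = b then -s * M a b + c * M b b else M i b))
        else if j = b then -s * ((if i = a then c * M a a + s * M b a
            else if i = b then -s * M a a + c * M b a else M i a))
            + c * ((if i = a then c * M a b + s * M b b
            else if i = b then -s * M a b + c * M b b else M i b))
        else (if i = a then c * M a j + s * M b j
            else if i = b then -s * M a j + c * M b j else M i j)) := by
      intro i j
      rw [hN, mul_givens_transpose_apply hab, givens_mul_apply hab, givens_mul_apply hab,
        givens_mul_apply hab]
    have hMba : M b a = M a b := by
      have := congrFun (congrFun hsymm a) b
      simpa [Matrix.transpose_apply] using this
    have hNaa : N a a = 1 := by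
      have h := hNentry a a
      simp only [if_pos rfl, eq_self_iff_true, if_true] at h
      rw [h, hMba, ← hθ]; ring
    have hθ' : c ^ 2 * M a a + 2 * c * s * M a b + s ^ 2 * M b b = 1 := hθ
    have hNbb : N b b = M a a + M b b - 1 := by
      have h := hNentry b b
      simp only [if_neg (Ne.symm hab), if_pos rfl, eq_self_iff_true, if_true] at h
      rw [h, hMba]
      nlinarith [hθ', hcs]
    have hNother : ∀ i, i ≠ a → i ≠ b → N i i = M i i := by
      intro i hia hib
      rw [hNentry i i, if_neg hia, if_neg hib, if_neg hia, if_neg hib]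
    -- N is symmetric
    have hNsymm : N.IsSymm := by
      rw [hN, Matrix.IsSymm]
      rw [Matrix.transpose_mul, Matrix.transpose_mul, Matrix.transpose_transpose, ← Matrix.mul_assoc]
      rw [hsymm]
    -- apply induction to S.erase a
    have hcard : S.erase a ⊂ S := Finset.erase_ssubset haS
    have herase_out : ∀ i, i ∉ S.erase a → N i i = 1 := by
      intro i hi
      by_cases hia : i = a
      · rw [hia]; exact hNaa
      · have hiS : i ∉ S := fun h => hi (Finset.mem_erase.mpr ⟨hia, h⟩)
        have hib : i ≠ b := fun h => hiS (h ▸ hbS)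
        rw [hNother i hia hib]; exact hout i hiS
    have herase_sum : ∑ i ∈ S.erase a, N i i = (S.erase a).card := by
      have hsum_split : ∑ i ∈ S, N i i = ∑ i ∈ S, M i i := by
        rw [← Finset.add_sum_erase _ _ haS, ← Finset.add_sum_erase _ _ haS]
        have hbS' : b ∈ S.erase a := Finset.mem_erase.mpr ⟨Ne.symm hab, hbS⟩
        rw [← Finset.add_sum_erase _ _ hbS', ← Finset.add_sum_erase _ _ hbS']
        have : ∑ i ∈ (S.erase a).erase b, N i i = ∑ i ∈ (S.erase a).erase b, M i i := by
          apply Finset.sum_congr rfl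
          intro i hi
          have hi' := Finset.mem_erase.mp hi
          have hi'' := Finset.mem_erase.mp hi'.2
          exact hNother i hi''.1 hi'.1
        rw [this, hNaa, hNbb]
        ring
      have : ∑ i ∈ S.erase a, N i i = ∑ i ∈ S, N i i - N a a := by
        rw [← Finset.add_sum_erase _ _ haS]; ring
      rw [this, hsum_split, hsum, hNaa, Finset.card_erase_of_mem haS]
      have : (1:ℕ) ≤ S.card := Finset.card_pos.mpr ⟨a, haS⟩
      push_cast [Nat.cast_sub this]
      ring
    obtain ⟨G₂, hG₂orth, hG₂diag⟩ := ih (S.erase a) hcard N hNsymm herase_out herase_sum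
    refine ⟨G₂ * G₁, ?_, ?_⟩
    · rw [Matrix.transpose_mul, Matrix.mul_assoc, ← Matrix.mul_assoc G₁,
        givens_orth hab hcs, Matrix.one_mul, hG₂orth]
    · intro i
      have : G₂ * G₁ * M * (G₂ * G₁)ᵀ = G₂ * N * G₂ᵀ := by
        rw [hN, Matrix.transpose_mul]
        noncomm_ring
      rw [this]
      exact hG₂diag i


lemma card_filter_lt_fin (p k : ℕ) (hk : k ≤ p) :
    (Finset.univ.filter (fun i : Fin p => (i : ℕ) < k)).card = k := by
  rw [Finset.card_filter]
  rw [Fin.sum_univ_eq_sum_range (fun i => if i < k then 1 else 0)]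
  rw [← Finset.card_filter]
  have : (Finset.range p).filter (fun i => i < k) = Finset.range k := by
    ext x
    simp only [Finset.mem_filter, Finset.mem_range]
    omega
  rw [this, Finset.card_range]

lemma antitone_partial_sum {p : ℕ} (f : Fin p → ℝ) (hf : Antitone f)
    (hsum : (∑ i, f i) = p) (k : ℕ) (hk : k ≤ p) :
    (k : ℝ) ≤ ∑ i ∈ Finset.univ.filter (fun i : Fin p => (i : ℕ) < k), f i := by
  set A := Finset.univ.filter (fun i : Fin p => (i : ℕ) < k) with hA
  set B := Finset.univ.filter (fun i : Fin p => ¬ (i : ℕ) < k) with hB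
  have hcardA : A.card = k := card_filter_lt_fin p k hk
  have hcardB : B.card = p - k := by
    have h1 : A.card + B.card = p := by
      rw [hA, hB, Finset.card_filter_add_card_filter_not, Finset.card_univ,
        Fintype.card_fin]
    omega
  have hpair : ∀ i ∈ A, ∀ j ∈ B, f j ≤ f i := by
    intro i hi j hj
    apply hf
    simp only [hA, hB, Finset.mem_filter] at hi hj
    exact Fin.le_def.mpr (by omega)
  have hkey : (B.card : ℝ) * ∑ i ∈ A, f i ≥ (A.card : ℝ) * ∑ j ∈ B, f j := by
    have h2 : ∑ i ∈ A, ∑ j ∈ B, (f i - f j) ≥ 0 := by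
      apply Finset.sum_nonneg; intro i hi
      apply Finset.sum_nonneg; intro j hj
      have := hpair i hi j hj; linarith
    have h3 : ∑ i ∈ A, ∑ j ∈ B, (f i - f j)
        = (B.card : ℝ) * ∑ i ∈ A, f i - (A.card : ℝ) * ∑ j ∈ B, f j := by
      simp only [Finset.sum_sub_distrib, Finset.sum_const, nsmul_eq_mul, Finset.mul_sum]
    linarith [h3 ▸ h2]
  have hAB : ∑ i ∈ A, f i + ∑ j ∈ B, f j = p := by
    rw [hA, hB, Finset.sum_filter_add_sum_filter_not]
    exact hsum
  rcases Nat.eq_zero_or_pos p with hp | hp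
  · have hk0 : k = 0 := by omega
    subst hp
    have hAe : A = ∅ := Finset.eq_empty_of_isEmpty A
    rw [hk0, hAe]
    simp
  · have hp' : (0:ℝ) < p := by exact_mod_cast hp
    rw [hcardA, hcardB] at hkey
    have hcast : ((p - k : ℕ) : ℝ) = (p : ℝ) - k := by
      push_cast [Nat.cast_sub hk]; ring
    rw [hcast] at hkey
    nlinarith [hkey, hAB]

lemma sum_eigenvalues_eq_trace' {M : Matrix (Fin p) (Fin p) ℝ} (hM : M.IsHermitian) :
    ∑ i, hM.eigenvalues i = Matrix.trace M := by
  conv_rhs => rw [hM.spectral_theorem]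
  rw [Unitary.conjStarAlgAut_apply]
  rw [Matrix.trace_mul_comm, ← Matrix.mul_assoc, Unitary.coe_star_mul_self, Matrix.one_mul,
    Matrix.trace_diagonal]
  simp [RCLike.ofReal_real_eq_id]

lemma charpoly_eq_prod_eig {M : Matrix (Fin p) (Fin p) ℝ} (hM : M.IsHermitian) :
    M.charpoly = ∏ i, (X - C (hM.eigenvalues i)) := by
  have h1 : (hM.eigenvectorUnitary : Matrix (Fin p) (Fin p) ℝ)
      * star (hM.eigenvectorUnitary : Matrix (Fin p) (Fin p) ℝ) = 1 :=
    Matrix.mem_unitaryGroup_iff.mp hM.eigenvectorUnitary.2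
  conv_lhs => rw [hM.spectral_theorem]
  rw [Unitary.conjStarAlgAut_apply]
  rw [charpoly_conj_orth _ _ _ h1]
  rw [show (RCLike.ofReal ∘ hM.eigenvalues : Fin p → ℝ) = hM.eigenvalues by
    simp [RCLike.ofReal_real_eq_id, Function.id_comp]]
  exact charpoly_diag _

lemma roots_prod_X_sub_C' (h : Fin p → ℝ) :
    (∏ i, (X - C (h i))).roots = Multiset.map h Finset.univ.val := by
  have : ∏ i, (X - C (h i)) = ((Finset.univ.val.map h).map (fun a => X - C a)).prod := by
    rw [Multiset.map_map]; rfl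
  rw [this, Polynomial.roots_multiset_prod_X_sub_C]

/-- A correlation matrix (symmetric positive semidefinite, unit diagonal) with decreasingly
ordered eigenvalues `λ₁ ≥ ⋯ ≥ λ_p` satisfies `λ₁+⋯+λ_k ≥ k` for all `k ≤ p` and
`λ₁+⋯+λ_p = p`; conversely, any decreasing non-negative `τ₁ ≥ ⋯ ≥ τ_p` with these
majorization properties arises as the eigenvalues of some correlation matrix. -/
theorem correlation_matrix_eigenvalues_majorize (p : ℕ) :
    (∀ (M : Matrix (Fin p) (Fin p) ℝ) (hM : M.PosSemidef), (∀ i, M i i = 1) →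
      ∀ lam : Fin p → ℝ, Antitone lam →
      (∃ σ : Equiv.Perm (Fin p), ∀ i, lam i = hM.1.eigenvalues (σ i)) →
      (∀ k : ℕ, k ≤ p →
          (k : ℝ) ≤ ∑ i ∈ Finset.univ.filter (fun i : Fin p => (i : ℕ) < k), lam i)
        ∧ (∑ i, lam i) = p)
    ∧ (∀ τ : Fin p → ℝ, Antitone τ → (∀ i, 0 ≤ τ i) →
        (∀ k : ℕ, k ≤ p →
          (k : ℝ) ≤ ∑ i ∈ Finset.univ.filter (fun i : Fin p => (i : ℕ) < k), τ i) →
        (∑ i, τ i) = p →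
        ∃ (M : Matrix (Fin p) (Fin p) ℝ) (hM : M.PosSemidef), (∀ i, M i i = 1) ∧
          ∃ σ : Equiv.Perm (Fin p), ∀ i, τ i = hM.1.eigenvalues (σ i)) := by
  constructor
  · intro M hM hdiag lam hlam ⟨σ, hσ⟩
    have hsum : (∑ i, lam i) = p := by
      calc ∑ i, lam i = ∑ i, hM.1.eigenvalues (σ i) := Finset.sum_congr rfl (fun i _ => hσ i)
        _ = ∑ i, hM.1.eigenvalues i := Equiv.sum_comp σ _
        _ = Matrix.trace M := sum_eigenvalues_eq_trace' hM.1
        _ = ∑ i, M i i := rfl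
        _ = p := by simp [hdiag]
    exact ⟨fun k hk => antitone_partial_sum lam hlam hsum k hk, hsum⟩
  · intro τ hτmono hτ0 hmaj hτsum
    set D := Matrix.diagonal τ with hD
    obtain ⟨G, hGorth, hGdiag⟩ := key_induction Finset.univ D
      (by rw [Matrix.IsSymm, Matrix.diagonal_transpose])
      (fun i hi => absurd (Finset.mem_univ i) hi)
      (by simp [hD, Matrix.diagonal_apply_eq, hτsum])
    set N := G * D * Gᵀ with hN
    have hGT : Gᴴ = Gᵀ := Matrix.conjTranspose_eq_transpose_of_trivial G
    have hPSD : N.PosSemidef := by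
      rw [hN, ← hGT]
      exact (Matrix.posSemidef_diagonal_iff.mpr hτ0).mul_mul_conjTranspose_same G
    refine ⟨N, hPSD, hGdiag, ?_⟩
    have hchar : N.charpoly = ∏ i, (X - C (τ i)) := by
      rw [hN, charpoly_conj_orth _ _ _ hGorth, hD]
      exact charpoly_diag τ
    have hchar2 : N.charpoly = ∏ i, (X - C (hPSD.1.eigenvalues i)) := charpoly_eq_prod_eig hPSD.1
    have hmult : Multiset.map τ Finset.univ.val
        = Multiset.map hPSD.1.eigenvalues Finset.univ.val := by
      rw [← roots_prod_X_sub_C' τ, ← roots_prod_X_sub_C' hPSD.1.eigenvalues, ← hchar, ← hchar2]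
    exact exists_perm_of_map_eq τ hPSD.1.eigenvalues hmult

end CorrelationAux
end
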